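/- Let C be a pretriangulated category (with shift by ℤ) equipped with a t-structure t. Assume t is non-degenerate: every object X of C such that X lies in C^{≤ n} (i.e. t.LE n X holds) for all integers n is a zero object, and every object X such that X lies in C^{≥ n} (i.e. t.GE n X holds) for all integers n is a zero object. If there exists an integer d > 0 such that for every object X of C the shift X⟦d⟧ is isomorphic to X, then every object of C is a zero object. (Equivalently: a nonzero d-periodic triangulated category admits no non-degenerate t-structure.) -/

import Mathlib

open CategoryTheory CategoryTheory.Limits CategoryTheory.Triangulated

/-- Proposition 3.12(2), `Prop:wt-structures-periodic`.  Let `C` be a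
pretriangulated category with a non-degenerate t-structure `t` (objects lying in all
`C^{≤ n}` are zero, and objects lying in all `C^{≥ n}` are zero).  If `C` is
`d`-periodic for some `d > 0` (every object `X` satisfies `X⟦d⟧ ≅ X`), then every
object of `C` is zero. -/
theorem periodic_no_nondegenerate_tstructure
    (C : Type*) [Category C] [Preadditive C] [HasZeroObject C] [HasShift C ℤ]
    [∀ n : ℤ, (CategoryTheory.shiftFunctor C n).Additive] [Pretriangulated C]
    (t : TStructure C)
    (hLE : ∀ X : C, (∀ n : ℤ, t.le n X) → IsZero X)
    (hGE : ∀ X : C, (∀ n : ℤ, t.ge n X) → IsZero X)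
    (d : ℤ) (hd : 0 < d) (hper : ∀ X : C, Nonempty ((X⟦d⟧) ≅ X)) :
    ∀ X : C, IsZero X := by
  -- an object in some LE n is in all LE m
  have keyLE : ∀ (Y : C) (n : ℤ), t.le n Y → IsZero Y := by
    intro Y n hY
    apply hLE
    have step : ∀ m : ℤ, t.le m Y → t.le (m - d) Y := by
      intro m hm
      have := t.le_shift m d (m - d) (by omega) Y hm
      exact (t.le (m - d)).prop_of_iso (hper Y).some this
    have down : ∀ k : ℕ, t.le (n - k * d) Y := by
      intro k
      induction k with
      | zero => simpa using hY
      | succ k ih =>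
        have := step _ ih
        have hq : n - (((k + 1 : ℕ) : ℤ)) * d = n - k * d - d := by push_cast; ring
        show t.le (n - (((k + 1 : ℕ) : ℤ)) * d) Y
        rw [hq]
        exact this
    intro m
    obtain ⟨k, hk⟩ : ∃ k : ℕ, n - k * d ≤ m := by
      refine ⟨(n - m).toNat, ?_⟩
      have := Int.self_le_toNat (n - m)
      nlinarith [Int.natCast_nonneg (n - m).toNat]
    exact t.le_monotone hk Y (down _)
  have keyGE : ∀ (Y : C) (n : ℤ), t.ge n Y → IsZero Y := by
    intro Y n hY
    apply hGE
    have e : ∀ Z : C, Nonempty ((Z⟦-d⟧) ≅ Z) := by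
      intro Z
      exact ⟨(shiftFunctor C (-d)).mapIso (hper Z).some.symm ≪≫
        (shiftEquiv C d).unitIso.symm.app Z⟩
    have step : ∀ m : ℤ, t.ge m Y → t.ge (m + d) Y := by
      intro m hm
      have := t.ge_shift m (-d) (m + d) (by omega) Y hm
      exact (t.ge (m + d)).prop_of_iso (e Y).some this
    have up : ∀ k : ℕ, t.ge (n + k * d) Y := by
      intro k
      induction k with
      | zero => simpa using hY
      | succ k ih =>
        have := step _ ih
        have hq : n + (((k + 1 : ℕ) : ℤ)) * d = n + k * d + d := by push_cast; ring
        show t.ge (n + (((k + 1 : ℕ) : ℤ)) * d) Y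
        rw [hq]
        exact this
    intro m
    obtain ⟨k, hk⟩ : ∃ k : ℕ, m ≤ n + k * d := by
      refine ⟨(m - n).toNat, ?_⟩
      have := Int.self_le_toNat (m - n)
      nlinarith [Int.natCast_nonneg (m - n).toNat]
    exact t.ge_antitone hk Y (up _)
  intro X
  obtain ⟨A, B, hA, hB, f, g, h, hT⟩ := t.exists_triangle_zero_one X
  exact Pretriangulated.Triangle.isZero₂_of_isZero₁₃ _ hT (keyLE A 0 hA) (keyGE B 1 hB)
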